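/- arXiv:2205.04954 — 4 statements merged into one kernel-verified Lean document; each statement's English description precedes it below -/
import Mathlib

section
/- Let n ≥ 0 and index (n+1)×(n+1) real matrices by Fin 1 ⊕ Fin n. For every orthogonal matrix A ∈ O(n+1) there exist ε ∈ {1, −1} and an orthogonal matrix B ∈ O(n) such that A is joined to the block matrix Matrix.fromBlocks (ε • 1) 0 0 B by a continuous path inside O(n+1). In other words, the block-sum homomorphism O(n) × O(1) → O(n+1) is surjective on path components. -/
open Matrix

set_option linter.unusedSectionVars false

section RotAux

variable {ι : Type*} [Fintype ι] [DecidableEq ι]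

private lemma vmv_mul (a b c d : ι → ℝ) :
    vecMulVec a b * vecMulVec c d = (b ⬝ᵥ c) • vecMulVec a d := by
  ext i j
  simp only [mul_apply, vecMulVec_apply, Matrix.smul_apply, dotProduct, smul_eq_mul, Finset.sum_mul]
  exact Finset.sum_congr rfl fun k _ => by ring

private lemma vmv_transpose (a b : ι → ℝ) : (vecMulVec a b)ᵀ = vecMulVec b a := by
  ext i j; simp [vecMulVec_apply, mul_comm]

private lemma vmv_mulVec (a b u : ι → ℝ) : vecMulVec a b *ᵥ u = (b ⬝ᵥ u) • a := by
  ext i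
  simp only [mulVec, dotProduct, vecMulVec_apply, Pi.smul_apply, smul_eq_mul, Finset.sum_mul]
  exact Finset.sum_congr rfl fun k _ => by ring

/-- Rotation by "angle" `(c, s)` in the plane spanned by the orthonormal pair `e, w`. -/
noncomputable def rotAux (e w : ι → ℝ) (c s : ℝ) : Matrix ι ι ℝ :=
  1 + (c - 1) • (vecMulVec e e + vecMulVec w w) + s • (vecMulVec e w - vecMulVec w e)

private lemma rotAux_transpose (e w : ι → ℝ) (c s : ℝ) :
    (rotAux e w c s)ᵀ = rotAux e w c (-s) := by
  simp only [rotAux, transpose_add, transpose_smul, transpose_sub, transpose_one, vmv_transpose,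
    neg_smul, smul_sub]
  abel

private lemma rotAux_one (e w : ι → ℝ) : rotAux e w 1 0 = 1 := by
  simp [rotAux]

private lemma rotAux_mul_rotAux (e w : ι → ℝ) (he : e ⬝ᵥ e = 1) (hw : w ⬝ᵥ w = 1)
    (hew : e ⬝ᵥ w = 0) (hwe : w ⬝ᵥ e = 0) (c s : ℝ) (hcs : c ^ 2 + s ^ 2 = 1) :
    rotAux e w c s * rotAux e w c (-s) = 1 := by
  simp only [rotAux, mul_add, add_mul, mul_sub, sub_mul, smul_mul_assoc, mul_smul_comm, smul_smul,
    one_mul, mul_one, smul_add, smul_sub, add_smul, sub_smul, vmv_mul, he, hw, hew, hwe,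
    one_smul, zero_smul]
  match_scalars <;> nlinarith [hcs]

private lemma rotAux_mem (e w : ι → ℝ) (he : e ⬝ᵥ e = 1) (hw : w ⬝ᵥ w = 1)
    (hew : e ⬝ᵥ w = 0) (hwe : w ⬝ᵥ e = 0) (c s : ℝ) (hcs : c ^ 2 + s ^ 2 = 1) :
    rotAux e w c s ∈ Matrix.orthogonalGroup ι ℝ := by
  rw [Matrix.mem_orthogonalGroup_iff, rotAux_transpose]
  exact rotAux_mul_rotAux e w he hw hew hwe c s hcs

private lemma rotAux_mulVec (e w u : ι → ℝ) (c s : ℝ) :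
    rotAux e w c s *ᵥ u = u + (c - 1) • ((e ⬝ᵥ u) • e + (w ⬝ᵥ u) • w)
      + s • ((w ⬝ᵥ u) • e - (e ⬝ᵥ u) • w) := by
  simp only [rotAux, add_mulVec, sub_mulVec, smul_mulVec, one_mulVec, vmv_mulVec]

private lemma rotAux_fixes (e w u : ι → ℝ) (c s : ℝ) (heu : e ⬝ᵥ u = c) (hwu : w ⬝ᵥ u = s)
    (huw : s • w = u - c • e) (hcs : c ^ 2 + s ^ 2 = 1) :
    rotAux e w c s *ᵥ u = e := by
  rw [rotAux_mulVec, heu, hwu]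
  have h2 : u = c • e + s • w := by rw [huw]; abel
  rw [h2]
  match_scalars <;> nlinarith [hcs]

end RotAux

private lemma block_form {n : ℕ} (C : Matrix (Fin 1 ⊕ Fin n) (Fin 1 ⊕ Fin n) ℝ)
    (hC : C ∈ Matrix.orthogonalGroup (Fin 1 ⊕ Fin n) ℝ) (ε : ℝ) (hε : ε ^ 2 = 1)
    (hcol : ∀ i, C i (Sum.inl 0) = ε * (Pi.single (Sum.inl 0) 1 : Fin 1 ⊕ Fin n → ℝ) i) :
    ∃ B : Matrix.orthogonalGroup (Fin n) ℝ,
      C = Matrix.fromBlocks (ε • (1 : Matrix (Fin 1) (Fin 1) ℝ)) 0 0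
        (B : Matrix (Fin n) (Fin n) ℝ) := by
  have hstar : star C = Cᵀ := by
    rw [Matrix.star_eq_conjTranspose, Matrix.conjTranspose_eq_transpose_of_trivial]
  have h1 : C * Cᵀ = 1 := by rw [← hstar]; exact ((Matrix.mem_orthogonalGroup_iff _ _).mp hC)
  have h2 : Cᵀ * C = 1 := by rw [← hstar]; exact ((Matrix.mem_orthogonalGroup_iff' _ _).mp hC)
  have hc00 : C (Sum.inl 0) (Sum.inl 0) = ε := by simpa using hcol (Sum.inl 0)
  have hcj : ∀ j, C (Sum.inr j) (Sum.inl 0) = 0 := fun j => by simpa using hcol (Sum.inr j)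
  have hrow : ∀ j, C (Sum.inl 0) (Sum.inr j) = 0 := by
    have := congrFun (congrFun h1 (Sum.inl 0)) (Sum.inl 0)
    rw [Matrix.mul_apply] at this
    rw [Fintype.sum_sum_type] at this
    simp only [Matrix.transpose_apply, Fin.sum_univ_one, hc00, Matrix.one_apply_eq] at this
    have hsum : ∑ j, C (Sum.inl 0) (Sum.inr j) * C (Sum.inl 0) (Sum.inr j) = 0 := by
      nlinarith [this]
    intro j
    have h := (Finset.sum_eq_zero_iff_of_nonneg (fun k _ => mul_self_nonneg
      (C (Sum.inl 0) (Sum.inr k)))).mp hsum j (Finset.mem_univ j)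
    exact mul_self_eq_zero.mp h
  refine ⟨⟨Matrix.of fun j k => C (Sum.inr j) (Sum.inr k), ?_⟩, ?_⟩
  · rw [Matrix.mem_orthogonalGroup_iff']
    ext j k
    have := congrFun (congrFun h2 (Sum.inr j)) (Sum.inr k)
    rw [Matrix.mul_apply] at this
    rw [Fintype.sum_sum_type] at this
    simp only [Matrix.transpose_apply, Fin.sum_univ_one, hrow, zero_mul, zero_add] at this
    rw [Matrix.mul_apply]
    simp only [Matrix.transpose_apply, Matrix.of_apply]
    rw [this]
    simp [Matrix.one_apply, Sum.inr.injEq]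
  · ext i j
    rcases i with i | i <;> rcases j with j | j
    · have : i = 0 := Subsingleton.elim _ _
      have hj : j = 0 := Subsingleton.elim _ _
      subst this; subst hj
      simp [Matrix.fromBlocks, hc00, Matrix.one_apply]
    · have : i = 0 := Subsingleton.elim _ _
      subst this
      simp [Matrix.fromBlocks, hrow j]
    · have : j = 0 := Subsingleton.elim _ _
      subst this
      simp [Matrix.fromBlocks, hcj i]
    · simp [Matrix.fromBlocks]

/-- Every orthogonal matrix `A ∈ O(n+1)` is joined by a continuous path inside
`O(n+1)` to a block matrix `fromBlocks (ε • 1) 0 0 B` with `ε ∈ {1, -1}` and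
`B ∈ O(n)`: the block-sum homomorphism `O(n) × O(1) → O(n+1)` is surjective on
path components. -/
theorem blockSum_surjective_on_path_components (n : ℕ)
    (A : Matrix.orthogonalGroup (Fin 1 ⊕ Fin n) ℝ) :
    ∃ ε : ℝ, (ε = 1 ∨ ε = -1) ∧
      ∃ B : Matrix.orthogonalGroup (Fin n) ℝ,
        ∃ M : Matrix.orthogonalGroup (Fin 1 ⊕ Fin n) ℝ,
          (M : Matrix (Fin 1 ⊕ Fin n) (Fin 1 ⊕ Fin n) ℝ) =
            Matrix.fromBlocks (ε • (1 : Matrix (Fin 1) (Fin 1) ℝ)) 0 0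
              (B : Matrix (Fin n) (Fin n) ℝ) ∧
          Joined A M := by
  classical
  set u : Fin 1 ⊕ Fin n → ℝ := fun i => (A : Matrix (Fin 1 ⊕ Fin n) (Fin 1 ⊕ Fin n) ℝ) i (Sum.inl 0) with hu
  set e : Fin 1 ⊕ Fin n → ℝ := Pi.single (Sum.inl 0) 1 with he
  set c : ℝ := u (Sum.inl 0) with hc
  have hstarA : star (A : Matrix (Fin 1 ⊕ Fin n) (Fin 1 ⊕ Fin n) ℝ)
      = (A : Matrix (Fin 1 ⊕ Fin n) (Fin 1 ⊕ Fin n) ℝ)ᵀ := by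
    rw [Matrix.star_eq_conjTranspose, Matrix.conjTranspose_eq_transpose_of_trivial]
  have huu : u ⬝ᵥ u = 1 := by
    have h2 : (A : Matrix (Fin 1 ⊕ Fin n) (Fin 1 ⊕ Fin n) ℝ)ᵀ
        * (A : Matrix (Fin 1 ⊕ Fin n) (Fin 1 ⊕ Fin n) ℝ) = 1 := by
      rw [← hstarA]; exact (Matrix.mem_orthogonalGroup_iff' _ _).mp A.2
    have := congrFun (congrFun h2 (Sum.inl 0)) (Sum.inl 0)
    rw [Matrix.mul_apply] at this
    simpa [dotProduct, Matrix.one_apply, hu] using this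
  have hee : e ⬝ᵥ e = 1 := by
    rw [he, single_dotProduct]; simp
  have heu : e ⬝ᵥ u = c := by
    rw [he, single_dotProduct, one_mul, hc]
  have hue : u ⬝ᵥ e = c := by
    rw [he, dotProduct_single, mul_one, hc]
  by_cases hc1 : c = 1 ∨ c = -1
  · -- trivial case: the first column of A is already ±e
    have hcsq : c * c = 1 := by rcases hc1 with h | h <;> rw [h] <;> ring
    have hrest : ∀ j, u (Sum.inr j) = 0 := by
      have hsplit : c * c + ∑ j, u (Sum.inr j) * u (Sum.inr j) = 1 := by
        have := huu
        rw [dotProduct, Fintype.sum_sum_type, Fin.sum_univ_one] at this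
        simpa [hc] using this
      have hsum : ∑ j, u (Sum.inr j) * u (Sum.inr j) = 0 := by nlinarith
      intro j
      exact mul_self_eq_zero.mp <|
        (Finset.sum_eq_zero_iff_of_nonneg (fun k _ => mul_self_nonneg (u (Sum.inr k)))).mp
          hsum j (Finset.mem_univ j)
    have hcol : ∀ i, (A : Matrix (Fin 1 ⊕ Fin n) (Fin 1 ⊕ Fin n) ℝ) i (Sum.inl 0)
        = c * (Pi.single (Sum.inl 0) 1 : Fin 1 ⊕ Fin n → ℝ) i := by
      rintro (i | i)
      · have : i = 0 := Subsingleton.elim _ _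
        subst this
        simp [← hu, hc]
        rfl
      · simpa using hrest i
    obtain ⟨B, hB⟩ := block_form _ A.2 c (by nlinarith) hcol
    exact ⟨c, hc1, B, A, hB, Joined.refl A⟩
  · -- main case : -1 < c < 1, rotate the first column of A to e
    push_neg at hc1
    have hcle : c * c ≤ 1 := by
      rw [← huu, dotProduct]
      exact Finset.single_le_sum (f := fun k => u k * u k)
        (fun k _ => mul_self_nonneg _) (Finset.mem_univ (Sum.inl 0))
    have hclt : c < 1 := lt_of_le_of_ne (by nlinarith) hc1.1
    have hcgt : -1 < c := lt_of_le_of_ne (by nlinarith) (Ne.symm hc1.2)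
    set s : ℝ := Real.sqrt (1 - c ^ 2) with hs
    have hs2 : s ^ 2 = 1 - c ^ 2 := Real.sq_sqrt (by nlinarith)
    have hspos : 0 < s := Real.sqrt_pos.mpr (by nlinarith)
    have hcs : c ^ 2 + s ^ 2 = 1 := by rw [hs2]; ring
    set w : Fin 1 ⊕ Fin n → ℝ := s⁻¹ • (u - c • e) with hw
    have hsw : s • w = u - c • e := by
      rw [hw, smul_smul, mul_inv_cancel₀ hspos.ne', one_smul]
    have hwu : w ⬝ᵥ u = s := by
      rw [hw]
      simp only [smul_dotProduct, sub_dotProduct, smul_dotProduct, huu, heu,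
        smul_eq_mul]
      field_simp
      nlinarith [hs2]
    have hwe : w ⬝ᵥ e = 0 := by
      rw [hw]
      simp only [smul_dotProduct, sub_dotProduct, hue, hee, smul_eq_mul]
      ring_nf
    have hew : e ⬝ᵥ w = 0 := by
      rw [hw]
      simp only [dotProduct_smul, dotProduct_sub, heu, hee, smul_eq_mul]
      ring_nf
    have hww : w ⬝ᵥ w = 1 := by
      rw [hw]
      simp only [smul_dotProduct, dotProduct_smul, sub_dotProduct,
        dotProduct_sub, huu, heu, hue, hee, smul_eq_mul]
      field_simp
      nlinarith [hs2]
    set θ : ℝ := Real.arccos c with hθ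
    have hcosθ : Real.cos θ = c := Real.cos_arccos (by linarith) (by linarith)
    have hsinθ : Real.sin θ = s := by rw [hθ, Real.sin_arccos, hs]
    have hmem : ∀ t : ℝ,
        rotAux e w (Real.cos (t * θ)) (Real.sin (t * θ))
          * (A : Matrix (Fin 1 ⊕ Fin n) (Fin 1 ⊕ Fin n) ℝ)
          ∈ Matrix.orthogonalGroup (Fin 1 ⊕ Fin n) ℝ := fun t =>
      mul_mem (rotAux_mem e w hee hww hew hwe _ _ (by
        rw [add_comm]; exact Real.sin_sq_add_cos_sq (t * θ))) A.2
    set M : Matrix.orthogonalGroup (Fin 1 ⊕ Fin n) ℝ :=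
      ⟨rotAux e w c s * (A : Matrix (Fin 1 ⊕ Fin n) (Fin 1 ⊕ Fin n) ℝ), by
        have := hmem 1
        rwa [one_mul, hcosθ, hsinθ] at this⟩ with hM
    have hjoined : Joined A M := by
      refine ⟨⟨⟨fun t => ⟨rotAux e w (Real.cos (t * θ)) (Real.sin (t * θ))
          * (A : Matrix (Fin 1 ⊕ Fin n) (Fin 1 ⊕ Fin n) ℝ), hmem t⟩, ?_⟩, ?_, ?_⟩⟩
      · apply Continuous.subtype_mk
        apply Continuous.matrix_mul _ continuous_const
        unfold rotAux
        apply Continuous.add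
        · apply Continuous.add continuous_const
          fun_prop
        · fun_prop
      · apply Subtype.ext
        simp [rotAux_one]
      · apply Subtype.ext
        simp [hcosθ, hsinθ, hM]
    have hrotu : rotAux e w c s *ᵥ u = e := rotAux_fixes e w u c s heu hwu hsw hcs
    have hcol : ∀ i, (M : Matrix (Fin 1 ⊕ Fin n) (Fin 1 ⊕ Fin n) ℝ) i (Sum.inl 0)
        = 1 * (Pi.single (Sum.inl 0) 1 : Fin 1 ⊕ Fin n → ℝ) i := by
      intro i
      have : (M : Matrix (Fin 1 ⊕ Fin n) (Fin 1 ⊕ Fin n) ℝ) i (Sum.inl 0)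
          = (rotAux e w c s *ᵥ u) i := by
        show (rotAux e w c s * (A : Matrix (Fin 1 ⊕ Fin n) (Fin 1 ⊕ Fin n) ℝ)) i (Sum.inl 0) = _
        rw [Matrix.mul_apply]
        simp [Matrix.mulVec, dotProduct, hu]
      rw [this, hrotu, he, one_mul]
    obtain ⟨B, hB⟩ := block_form _ M.2 1 (by norm_num) hcol
    exact ⟨1, Or.inl rfl, B, M, hB, hjoined⟩
end

section
/- Let n ≥ 1, let S be the unit sphere of EuclideanSpace ℝ (Fin n), let e₀ ∈ S be the first standard basis vector, and let ℝP^{n−1} denote the quotient topological space of S by the equivalence relation identifying x with −x. Then A • [x] := [A.mulVec x] defines a continuous transitive action of O(n) on ℝP^{n−1}, and the map from the quotient space O(n) ⧸ K to ℝP^{n−1} induced by A ↦ [A.mulVec e₀] is a homeomorphism, where K = {A ∈ O(n) : A.mulVec e₀ = e₀ or A.mulVec e₀ = −e₀} is the stabilizer subgroup of the class [e₀]. -/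
/-- The first standard basis vector of `EuclideanSpace ℝ (Fin n)`. -/
noncomputable def e0 (n : ℕ) : EuclideanSpace ℝ (Fin n) :=
  (WithLp.equiv 2 (Fin n → ℝ)).symm (fun i => if (i : ℕ) = 0 then (1 : ℝ) else 0)

/-- Real projective space `ℝP^{n-1}`: the quotient of the unit sphere of
`EuclideanSpace ℝ (Fin n)` by the antipodal identification `x ∼ -x`. -/
abbrev RP (n : ℕ) : Type :=
  Quot (fun x y : Metric.sphere (0 : EuclideanSpace ℝ (Fin n)) 1 =>
    (x : EuclideanSpace ℝ (Fin n)) = -(y : EuclideanSpace ℝ (Fin n)))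

/-- The stabilizer subgroup in `O(n)` of the projective class of `e₀`:
those `A` with `A e₀ = e₀` or `A e₀ = -e₀`. -/
def stabLine (n : ℕ) : Subgroup (Matrix.orthogonalGroup (Fin n) ℝ) where
  carrier := {A | (A : Matrix (Fin n) (Fin n) ℝ).mulVec (e0 n) = e0 n ∨
    (A : Matrix (Fin n) (Fin n) ℝ).mulVec (e0 n) = -(e0 n)}
  one_mem' := by simp [Set.mem_setOf_eq, Matrix.one_mulVec]
  mul_mem' := by
    intro a b ha hb
    simp only [Set.mem_setOf_eq] at *
    have key : ((a * b : Matrix.orthogonalGroup (Fin n) ℝ) : Matrix (Fin n) (Fin n) ℝ).mulVec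
        (e0 n) = (a : Matrix (Fin n) (Fin n) ℝ).mulVec
          ((b : Matrix (Fin n) (Fin n) ℝ).mulVec (e0 n)) := by
      rw [Submonoid.coe_mul, Matrix.mulVec_mulVec]
    have hneg : (a : Matrix (Fin n) (Fin n) ℝ).mulVec (-(e0 n)) =
        -((a : Matrix (Fin n) (Fin n) ℝ).mulVec (e0 n)) := Matrix.mulVec_neg _ _
    rcases hb with hb | hb <;> rcases ha with ha | ha
    · left; rw [key, hb, ha]
    · right; rw [key, hb, ha]
    · right; rw [key, hb, hneg, ha]
    · left; rw [key, hb, hneg, ha, neg_neg]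
  inv_mem' := by
    intro a ha
    simp only [Set.mem_setOf_eq] at *
    rcases ha with ha | ha
    · left
      conv_lhs => rw [← ha]
      rw [Matrix.mulVec_mulVec]
      norm_cast
      rw [inv_mul_cancel]
      exact Matrix.one_mulVec _
    · right
      have h2 : e0 n = -((a : Matrix (Fin n) (Fin n) ℝ).mulVec (e0 n)) := by
        rw [ha, neg_neg]
      conv_lhs => rw [h2]
      rw [Matrix.mulVec_neg, Matrix.mulVec_mulVec, neg_inj]
      norm_cast
      rw [inv_mul_cancel]
      exact Matrix.one_mulVec _

open Matrix in
lemma aux_dot {n : ℕ} {A : Matrix (Fin n) (Fin n) ℝ}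
    (hA : A ∈ Matrix.orthogonalGroup (Fin n) ℝ) (x y : Fin n → ℝ) :
    (A.mulVec x) ⬝ᵥ (A.mulVec y) = x ⬝ᵥ y := by
  rw [Matrix.dotProduct_mulVec, Matrix.vecMul_mulVec]
  have h : Aᵀ * A = 1 := by
    have := Iff.mp (Matrix.mem_orthogonalGroup_iff' (Fin n) ℝ) hA
    simpa [Matrix.star_eq_conjTranspose, Matrix.conjTranspose] using this
  rw [h, Matrix.vecMul_one]

lemma aux_norm {n : ℕ} {A : Matrix (Fin n) (Fin n) ℝ}
    (hA : A ∈ Matrix.orthogonalGroup (Fin n) ℝ) (x : EuclideanSpace ℝ (Fin n)) :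
    ‖((WithLp.equiv 2 (Fin n → ℝ)).symm (A.mulVec x))‖ = ‖x‖ := by
  rw [EuclideanSpace.norm_eq, EuclideanSpace.norm_eq]
  congr 1
  have := aux_dot hA x x
  simpa [dotProduct, Real.norm_eq_abs, sq_abs, pow_two] using this


abbrev Sph (n : ℕ) := Metric.sphere (0 : EuclideanSpace ℝ (Fin n)) 1

abbrev sR (n : ℕ) : Sph n → Sph n → Prop := fun x y =>
  (x : EuclideanSpace ℝ (Fin n)) = -(y : EuclideanSpace ℝ (Fin n))

noncomputable def sAct {n : ℕ} (A : Matrix.orthogonalGroup (Fin n) ℝ) (x : Sph n) : Sph n :=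
  ⟨(WithLp.equiv 2 (Fin n → ℝ)).symm
      ((A : Matrix (Fin n) (Fin n) ℝ).mulVec (x : EuclideanSpace ℝ (Fin n))), by
    rw [mem_sphere_zero_iff_norm, aux_norm A.2]
    exact mem_sphere_zero_iff_norm.mp x.2⟩

lemma sAct_coe {n : ℕ} (A : Matrix.orthogonalGroup (Fin n) ℝ) (x : Sph n) :
    (sAct A x : EuclideanSpace ℝ (Fin n)) =
      (A : Matrix (Fin n) (Fin n) ℝ).mulVec (x : EuclideanSpace ℝ (Fin n)) := rfl

lemma sAct_one {n : ℕ} (x : Sph n) : sAct 1 x = x := by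
  apply Subtype.ext
  apply WithLp.ofLp_injective 2
  rw [sAct_coe]
  exact Matrix.one_mulVec _

lemma sAct_mul {n : ℕ} (A B : Matrix.orthogonalGroup (Fin n) ℝ) (x : Sph n) :
    sAct (A * B) x = sAct A (sAct B x) := by
  apply Subtype.ext
  apply WithLp.ofLp_injective 2
  simp only [sAct_coe, Submonoid.coe_mul]
  rw [Matrix.mulVec_mulVec]

noncomputable def act {n : ℕ} (A : Matrix.orthogonalGroup (Fin n) ℝ) : RP n → RP n :=
  Quot.map (sAct A) (by
    intro x y hxy
    show ((sAct A x : EuclideanSpace ℝ (Fin n))) = -(sAct A y : EuclideanSpace ℝ (Fin n))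
    apply WithLp.ofLp_injective 2
    rw [sAct_coe, WithLp.ofLp_neg, sAct_coe, hxy, WithLp.ofLp_neg, Matrix.mulVec_neg])

lemma quot_mk_eq_iff {n : ℕ} (x y : Sph n) :
    Quot.mk (sR n) x = Quot.mk (sR n) y ↔
      (x = y ∨ (x : EuclideanSpace ℝ (Fin n)) = -(y : EuclideanSpace ℝ (Fin n))) := by
  constructor
  · intro h
    have h' := Quot.eq.mp h
    clear h
    induction h' with
    | rel a b hab => exact Or.inr hab
    | refl a => exact Or.inl rfl
    | symm a b hab ih =>
      rcases ih with h1 | h1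
      · exact Or.inl h1.symm
      · exact Or.inr (by rw [h1, neg_neg])
    | trans a b c hab hbc ih1 ih2 =>
      rcases ih1 with h1 | h1 <;> rcases ih2 with h2 | h2
      · exact Or.inl (h1.trans h2)
      · exact Or.inr (by rw [← h2, ← h1])
      · exact Or.inr (by rw [h1, h2]) -- a = -b, b = c
      · exact Or.inl (Subtype.ext (by rw [h1, h2, neg_neg]))
  · rintro (rfl | h)
    · rfl
    · exact Quot.sound h

lemma isOpenQuotientMap_q (n : ℕ) : IsOpenQuotientMap (Quot.mk (sR n)) := by
  refine ⟨Quot.exists_rep, continuous_quot_mk, ?_⟩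
  intro U hU
  rw [isOpen_coinduced]
  have hpre : Quot.mk (sR n) ⁻¹' (Quot.mk (sR n) '' U) = U ∪ (fun x => -x) '' U := by
    ext z
    simp only [Set.mem_preimage, Set.mem_image, Set.mem_union]
    constructor
    · rintro ⟨u, huU, hu⟩
      rcases (quot_mk_eq_iff u z).mp hu with rfl | h
      · exact Or.inl huU
      · refine Or.inr ⟨u, huU, ?_⟩
        apply Subtype.ext
        show -(u : EuclideanSpace ℝ (Fin n)) = (z : EuclideanSpace ℝ (Fin n))
        rw [h, neg_neg]
    · rintro (hz | ⟨u, huU, rfl⟩)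
      · exact ⟨z, hz, rfl⟩
      · refine ⟨u, huU, (quot_mk_eq_iff u (-u)).mpr (Or.inr ?_)⟩
        show (u : EuclideanSpace ℝ (Fin n)) = - -(u : EuclideanSpace ℝ (Fin n))
        rw [neg_neg]
  rw [hpre]
  exact hU.union ((Homeomorph.neg (Sph n)).isOpenMap U hU)

lemma rp_t2 (n : ℕ) : T2Space (RP n) := by
  constructor
  intro a b hab
  obtain ⟨x, rfl⟩ := Quot.exists_rep a
  obtain ⟨y, rfl⟩ := Quot.exists_rep b
  have hR : IsClosed {p : Sph n × Sph n | p.1 = p.2 ∨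
      (p.1 : EuclideanSpace ℝ (Fin n)) = -(p.2 : EuclideanSpace ℝ (Fin n))} := by
    apply IsClosed.union
    · exact isClosed_eq continuous_fst continuous_snd
    · exact isClosed_eq (continuous_subtype_val.comp continuous_fst)
        ((continuous_subtype_val.comp continuous_snd).neg)
  have hopen : IsOpen {p : Sph n × Sph n | p.1 = p.2 ∨
      (p.1 : EuclideanSpace ℝ (Fin n)) = -(p.2 : EuclideanSpace ℝ (Fin n))}ᶜ :=
    hR.isOpen_compl
  have hxy : (x, y) ∈ {p : Sph n × Sph n | p.1 = p.2 ∨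
      (p.1 : EuclideanSpace ℝ (Fin n)) = -(p.2 : EuclideanSpace ℝ (Fin n))}ᶜ := by
    intro h
    exact hab ((quot_mk_eq_iff x y).mpr h)
  obtain ⟨U, V, hU, hV, hxU, hyV, hUV⟩ := (isOpen_prod_iff.mp hopen) x y hxy
  refine ⟨Quot.mk (sR n) '' U, Quot.mk (sR n) '' V,
    (isOpenQuotientMap_q n).isOpenMap U hU, (isOpenQuotientMap_q n).isOpenMap V hV,
    ⟨x, hxU, rfl⟩, ⟨y, hyV, rfl⟩, ?_⟩
  rw [Set.disjoint_left]
  rintro c ⟨u, huU, rfl⟩ ⟨v, hvV, hv⟩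
  have := (quot_mk_eq_iff v u).mp hv
  have hmem : (u, v) ∈ {p : Sph n × Sph n | p.1 = p.2 ∨
      (p.1 : EuclideanSpace ℝ (Fin n)) = -(p.2 : EuclideanSpace ℝ (Fin n))} := by
    rcases this with rfl | h
    · exact Or.inl rfl
    · exact Or.inr (by rw [h, neg_neg])
  exact hUV (Set.mk_mem_prod huU hvV) hmem

lemma continuous_sAct (n : ℕ) :
    Continuous (fun p : Matrix.orthogonalGroup (Fin n) ℝ × Sph n => sAct p.1 p.2) := by
  apply Continuous.subtype_mk
  apply Continuous.comp (PiLp.continuous_toLp 2 (fun _ : Fin n => ℝ))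
  exact Continuous.matrix_mulVec
    (continuous_subtype_val.comp continuous_fst)
    ((PiLp.continuous_ofLp 2 (fun _ : Fin n => ℝ)).comp
      (continuous_subtype_val.comp continuous_snd))

lemma continuous_act (n : ℕ) :
    Continuous (fun p : Matrix.orthogonalGroup (Fin n) ℝ × RP n => act p.1 p.2) := by
  have hq : IsOpenQuotientMap
      (Prod.map (id : Matrix.orthogonalGroup (Fin n) ℝ → _) (Quot.mk (sR n))) :=
    IsOpenQuotientMap.id.prodMap (isOpenQuotientMap_q n)
  rw [← hq.continuous_comp_iff]
  exact (continuous_quot_mk).comp (continuous_sAct n)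

lemma isCompact_O (n : ℕ) :
    IsCompact ((Matrix.orthogonalGroup (Fin n) ℝ : Submonoid _) : Set (Matrix (Fin n) (Fin n) ℝ)) := by
  have hsub : ((Matrix.orthogonalGroup (Fin n) ℝ : Submonoid _) : Set (Matrix (Fin n) (Fin n) ℝ)) ⊆
      Set.pi Set.univ (fun _ : Fin n => Set.pi Set.univ (fun _ : Fin n => Set.Icc (-1 : ℝ) 1)) := by
    intro A hA
    have h1 : A * star A = 1 := Iff.mp (Matrix.mem_orthogonalGroup_iff (Fin n) ℝ) hA
    intro i _ j _
    have hrow : ∑ k, A i k * A i k = 1 := by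
      have := congrArg (fun M => M i i) h1
      simpa [Matrix.mul_apply, Matrix.one_apply] using this
    have hle : A i j * A i j ≤ 1 := by
      rw [← hrow]
      exact Finset.single_le_sum (f := fun k => A i k * A i k)
        (fun k _ => mul_self_nonneg _) (Finset.mem_univ j)
    have : |A i j| ≤ 1 := by
      rw [← abs_mul_abs_self (A i j)] at hle
      nlinarith [abs_nonneg (A i j)]
    exact abs_le.mp this
  have hcpt : IsCompact (Set.pi Set.univ
      (fun _ : Fin n => Set.pi Set.univ (fun _ : Fin n => Set.Icc (-1 : ℝ) 1))) :=
    isCompact_univ_pi (fun _ => isCompact_univ_pi (fun _ => isCompact_Icc))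
  refine IsCompact.of_isClosed_subset hcpt ?_ hsub
  have : ((Matrix.orthogonalGroup (Fin n) ℝ : Submonoid _) : Set (Matrix (Fin n) (Fin n) ℝ)) =
      {A | A * star A = 1} := by
    ext A; exact Matrix.mem_orthogonalGroup_iff (Fin n) ℝ
  rw [this]
  exact isClosed_eq (continuous_id.matrix_mul continuous_id.matrix_conjTranspose) continuous_const

instance compact_O (n : ℕ) : CompactSpace (Matrix.orthogonalGroup (Fin n) ℝ) :=
  isCompact_iff_compactSpace.mp (isCompact_O n)

lemma e0_eq_single (n : ℕ) (hn : 1 ≤ n) :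
    e0 n = EuclideanSpace.single (⟨0, hn⟩ : Fin n) (1 : ℝ) := by
  haveI : NeZero n := ⟨by omega⟩
  apply (WithLp.equiv 2 (Fin n → ℝ)).injective
  funext i
  simp only [e0, EuclideanSpace.single, Equiv.apply_symm_apply]
  rw [show (WithLp.equiv 2 (Fin n → ℝ)) (PiLp.single 2 ⟨0, hn⟩ 1) = Pi.single (⟨0, hn⟩ : Fin n) (1:ℝ) from rfl, Pi.single_apply]
  congr 1
  exact propext (Fin.ext_iff (a := i) (b := ⟨0, hn⟩)).symm

lemma e0_norm (n : ℕ) (hn : 1 ≤ n) : ‖e0 n‖ = 1 := by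
  rw [e0_eq_single n hn, EuclideanSpace.norm_single]
  norm_num

noncomputable def e0pt (n : ℕ) (hn : 1 ≤ n) : Sph n :=
  ⟨e0 n, by rw [mem_sphere_zero_iff_norm]; exact e0_norm n hn⟩

lemma sphere_transitive (n : ℕ) (hn : 1 ≤ n) (x : Sph n) :
    ∃ A : Matrix.orthogonalGroup (Fin n) ℝ,
      (A : Matrix (Fin n) (Fin n) ℝ).mulVec (e0 n) = (x : EuclideanSpace ℝ (Fin n)) := by
  haveI : NeZero n := ⟨by omega⟩
  have hnorm : ‖(x : EuclideanSpace ℝ (Fin n))‖ = 1 := mem_sphere_zero_iff_norm.mp x.2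
  have hcard : Module.finrank ℝ (EuclideanSpace ℝ (Fin n)) = Fintype.card (Fin n) := by
    simp [finrank_euclideanSpace]
  have horth : Orthonormal ℝ (Set.restrict {(0 : Fin n)}
      (fun _ : Fin n => (x : EuclideanSpace ℝ (Fin n)))) := by
    constructor
    · intro i
      exact hnorm
    · intro i j hij
      exact absurd (Subtype.ext ((i.2.out).trans (j.2.out).symm)) hij
  obtain ⟨b, hb⟩ := horth.exists_orthonormalBasis_extension_of_card_eq hcard
  have hb0 : b 0 = (x : EuclideanSpace ℝ (Fin n)) := hb 0 rfl
  set M : Matrix (Fin n) (Fin n) ℝ := Matrix.of (fun i j => (b j : EuclideanSpace ℝ (Fin n)) i)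
  have hM : M ∈ Matrix.orthogonalGroup (Fin n) ℝ := by
    rw [Matrix.mem_orthogonalGroup_iff' (Fin n) ℝ]
    ext j k
    have := b.orthonormal
    rw [orthonormal_iff_ite] at this
    have hinner := this j k
    rw [PiLp.inner_apply] at hinner
    simp only [RCLike.inner_apply, starRingEnd_apply, star_trivial] at hinner
    simp only [Matrix.mul_apply, Matrix.star_eq_conjTranspose, Matrix.conjTranspose_apply,
      star_trivial, Matrix.one_apply, M, Matrix.of_apply]
    rw [← hinner]
    simp [mul_comm]
  refine ⟨⟨M, hM⟩, ?_⟩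
  funext i
  have he0 : ∀ j : Fin n, e0 n j = if j = 0 then (1:ℝ) else 0 := by
    intro j
    simp only [e0]
    show (if (j:ℕ) = 0 then (1:ℝ) else 0) = if j = 0 then 1 else 0
    exact if_congr Fin.val_eq_zero_iff rfl rfl
  show M.mulVec (e0 n) i = _
  rw [Matrix.mulVec, dotProduct]
  have : ∀ j : Fin n, M i j * e0 n j = if j = 0 then M i 0 else 0 := by
    intro j
    rw [he0 j]
    split <;> rename_i hj <;> simp [hj]
  rw [Finset.sum_congr rfl (fun j _ => this j), Finset.sum_ite_eq' Finset.univ 0 (fun _ => M i 0)]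
  simp [M, hb0]

lemma inv_mulVec_mulVec {n : ℕ} (A : Matrix.orthogonalGroup (Fin n) ℝ) (w : Fin n → ℝ) :
    ((A⁻¹ : Matrix.orthogonalGroup (Fin n) ℝ) : Matrix (Fin n) (Fin n) ℝ).mulVec
      ((A : Matrix (Fin n) (Fin n) ℝ).mulVec w) = w := by
  rw [Matrix.mulVec_mulVec]
  have h : ((A⁻¹ : Matrix.orthogonalGroup (Fin n) ℝ) : Matrix (Fin n) (Fin n) ℝ) *
      (A : Matrix (Fin n) (Fin n) ℝ) = 1 := by
    norm_cast
    rw [inv_mul_cancel]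
    rfl
  rw [h, Matrix.one_mulVec]

lemma mulVec_inv_mulVec {n : ℕ} (A : Matrix.orthogonalGroup (Fin n) ℝ) (w : Fin n → ℝ) :
    (A : Matrix (Fin n) (Fin n) ℝ).mulVec
      (((A⁻¹ : Matrix.orthogonalGroup (Fin n) ℝ) : Matrix (Fin n) (Fin n) ℝ).mulVec w) = w := by
  have := inv_mulVec_mulVec A⁻¹ w
  rwa [inv_inv] at this

lemma act_one {n : ℕ} (u : RP n) : act (1 : Matrix.orthogonalGroup (Fin n) ℝ) u = u := by
  induction u using Quot.ind with
  | _ x => exact congrArg (Quot.mk _) (sAct_one x)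

lemma act_mul {n : ℕ} (A B : Matrix.orthogonalGroup (Fin n) ℝ) (u : RP n) :
    act (A * B) u = act A (act B u) := by
  induction u using Quot.ind with
  | _ x => exact congrArg (Quot.mk _) (sAct_mul A B x)

lemma mem_stabLine_iff {n : ℕ} (g : Matrix.orthogonalGroup (Fin n) ℝ) :
    g ∈ stabLine n ↔ ((g : Matrix (Fin n) (Fin n) ℝ).mulVec (e0 n) = e0 n ∨
      (g : Matrix (Fin n) (Fin n) ℝ).mulVec (e0 n) = -(e0 n)) := Iff.rfl

noncomputable def phi (n : ℕ) (hn : 1 ≤ n) (A : Matrix.orthogonalGroup (Fin n) ℝ) : RP n :=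
  Quot.mk (sR n) (sAct A (e0pt n hn))

lemma phi_eq_iff (n : ℕ) (hn : 1 ≤ n) (a b : Matrix.orthogonalGroup (Fin n) ℝ) :
    phi n hn a = phi n hn b ↔ a⁻¹ * b ∈ stabLine n := by
  rw [phi, phi, quot_mk_eq_iff, mem_stabLine_iff, Subtype.ext_iff]
  simp only [WithLp.ext_iff, WithLp.ofLp_neg, sAct_coe]
  have hcoe : ((e0pt n hn : Sph n) : EuclideanSpace ℝ (Fin n)) = e0 n := rfl
  rw [hcoe]
  have hmul : (((a⁻¹ * b : Matrix.orthogonalGroup (Fin n) ℝ)) :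
      Matrix (Fin n) (Fin n) ℝ).mulVec (e0 n) =
      ((a⁻¹ : Matrix.orthogonalGroup (Fin n) ℝ) : Matrix (Fin n) (Fin n) ℝ).mulVec
        ((b : Matrix (Fin n) (Fin n) ℝ).mulVec (e0 n)) := by
    rw [Submonoid.coe_mul, Matrix.mulVec_mulVec]
  constructor
  · rintro (h | h)
    · left
      rw [hmul, ← h, inv_mulVec_mulVec]
    · right
      rw [hmul]
      have : (b : Matrix (Fin n) (Fin n) ℝ).mulVec (e0 n) =
          -((a : Matrix (Fin n) (Fin n) ℝ).mulVec (e0 n)) := by rw [h, neg_neg]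
      rw [this, Matrix.mulVec_neg, inv_mulVec_mulVec]
  · rintro (h | h)
    · left
      rw [hmul] at h
      have h2 := congrArg (fun w => (a : Matrix (Fin n) (Fin n) ℝ).mulVec w) h
      simp only [] at h2
      rw [mulVec_inv_mulVec] at h2
      exact h2.symm
    · right
      rw [hmul] at h
      have h2 := congrArg (fun w => (a : Matrix (Fin n) (Fin n) ℝ).mulVec w) h
      simp only [] at h2
      rw [mulVec_inv_mulVec] at h2
      rw [h2, Matrix.mulVec_neg, neg_neg]

noncomputable def fbar (n : ℕ) (hn : 1 ≤ n) :
    Matrix.orthogonalGroup (Fin n) ℝ ⧸ stabLine n → RP n :=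
  fun q => Quotient.liftOn' q (phi n hn) (by
    intro a b hab
    rw [QuotientGroup.leftRel_apply] at hab
    exact (phi_eq_iff n hn a b).mpr hab)

lemma fbar_mk (n : ℕ) (hn : 1 ≤ n) (A : Matrix.orthogonalGroup (Fin n) ℝ) :
    fbar n hn (QuotientGroup.mk A) = phi n hn A := by rfl

lemma fbar_bijective (n : ℕ) (hn : 1 ≤ n) : Function.Bijective (fbar n hn) := by
  constructor
  · intro a b h
    obtain ⟨x, rfl⟩ := QuotientGroup.mk_surjective a
    obtain ⟨y, rfl⟩ := QuotientGroup.mk_surjective b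
    rw [fbar_mk, fbar_mk] at h
    exact (QuotientGroup.eq).mpr ((phi_eq_iff n hn x y).mp h)
  · intro u
    obtain ⟨x, rfl⟩ := Quot.exists_rep u
    obtain ⟨A, hA⟩ := sphere_transitive n hn x
    refine ⟨QuotientGroup.mk A, ?_⟩
    rw [fbar_mk]
    exact congrArg (Quot.mk (sR n)) (Subtype.ext (WithLp.ofLp_injective 2 hA))

lemma fbar_continuous (n : ℕ) (hn : 1 ≤ n) : Continuous (fbar n hn) := by
  rw [(isQuotientMap_quotient_mk' (s := QuotientGroup.leftRel (stabLine n))).continuous_iff]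
  have : fbar n hn ∘ (@Quotient.mk' _ (QuotientGroup.leftRel (stabLine n))) = phi n hn := rfl
  rw [this]
  exact continuous_quot_mk.comp ((continuous_sAct n).comp
    (continuous_id.prodMk continuous_const))

theorem orthogonalGroup_quotient_homeomorph_projectiveSpace' (n : ℕ) (hn : 1 ≤ n) :
    ∃ act : Matrix.orthogonalGroup (Fin n) ℝ → RP n → RP n,
      (∀ (A : Matrix.orthogonalGroup (Fin n) ℝ)
          (x : Metric.sphere (0 : EuclideanSpace ℝ (Fin n)) 1),
        ∃ y : Metric.sphere (0 : EuclideanSpace ℝ (Fin n)) 1,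
          (y : EuclideanSpace ℝ (Fin n)) =
            (A : Matrix (Fin n) (Fin n) ℝ).mulVec (x : EuclideanSpace ℝ (Fin n)) ∧
          act A (Quot.mk _ x) = Quot.mk _ y) ∧
      (∀ u : RP n, act 1 u = u) ∧
      (∀ A B : Matrix.orthogonalGroup (Fin n) ℝ, ∀ u : RP n,
        act (A * B) u = act A (act B u)) ∧
      Continuous (fun p : Matrix.orthogonalGroup (Fin n) ℝ × RP n => act p.1 p.2) ∧
      (∀ u v : RP n, ∃ A : Matrix.orthogonalGroup (Fin n) ℝ, act A u = v) ∧
      (∃ h : (Matrix.orthogonalGroup (Fin n) ℝ ⧸ stabLine n) ≃ₜ RP n,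
        ∀ A : Matrix.orthogonalGroup (Fin n) ℝ,
          ∃ y : Metric.sphere (0 : EuclideanSpace ℝ (Fin n)) 1,
            (y : EuclideanSpace ℝ (Fin n)) =
              (A : Matrix (Fin n) (Fin n) ℝ).mulVec (e0 n) ∧
            h (QuotientGroup.mk A) = Quot.mk _ y) := by
  refine ⟨act, ?_, act_one, act_mul, continuous_act n, ?_, ?_⟩
  · intro A x
    exact ⟨sAct A x, rfl, rfl⟩
  · intro u v
    obtain ⟨x, rfl⟩ := Quot.exists_rep u
    obtain ⟨y, rfl⟩ := Quot.exists_rep v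
    obtain ⟨A, hA⟩ := sphere_transitive n hn x
    obtain ⟨B, hB⟩ := sphere_transitive n hn y
    refine ⟨B * A⁻¹, ?_⟩
    have hx : Quot.mk (sR n) x = act A (Quot.mk (sR n) (e0pt n hn)) :=
      (congrArg (Quot.mk (sR n)) (Subtype.ext (WithLp.ofLp_injective 2 hA))).symm
    rw [hx, act_mul, ← act_mul A⁻¹ A, inv_mul_cancel, act_one]
    exact congrArg (Quot.mk (sR n)) (Subtype.ext (WithLp.ofLp_injective 2 hB))
  · haveI := rp_t2 n
    refine ⟨Continuous.homeoOfEquivCompactToT2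
      (f := Equiv.ofBijective _ (fbar_bijective n hn)) (fbar_continuous n hn), ?_⟩
    intro A
    refine ⟨sAct A (e0pt n hn), rfl, ?_⟩
    show fbar n hn (QuotientGroup.mk A) = _
    rw [fbar_mk]
    rfl

/-- `O(n)` acts continuously and transitively on `ℝP^{n-1}` by
`A • [x] = [A.mulVec x]`, and the induced map `O(n) ⧸ K → ℝP^{n-1}`, where `K`
is the stabilizer of the class `[e₀]`, is a homeomorphism. -/
theorem orthogonalGroup_quotient_homeomorph_projectiveSpace (n : ℕ) (hn : 1 ≤ n) :
    ∃ act : Matrix.orthogonalGroup (Fin n) ℝ → RP n → RP n,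
      -- the action is induced by `A • [x] = [A.mulVec x]`
      (∀ (A : Matrix.orthogonalGroup (Fin n) ℝ)
          (x : Metric.sphere (0 : EuclideanSpace ℝ (Fin n)) 1),
        ∃ y : Metric.sphere (0 : EuclideanSpace ℝ (Fin n)) 1,
          (y : EuclideanSpace ℝ (Fin n)) =
            (A : Matrix (Fin n) (Fin n) ℝ).mulVec (x : EuclideanSpace ℝ (Fin n)) ∧
          act A (Quot.mk _ x) = Quot.mk _ y) ∧
      -- it is an action: `1` acts as the identity and the action is compatible with
      -- multiplication
      (∀ u : RP n, act 1 u = u) ∧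
      (∀ A B : Matrix.orthogonalGroup (Fin n) ℝ, ∀ u : RP n,
        act (A * B) u = act A (act B u)) ∧
      -- continuity
      Continuous (fun p : Matrix.orthogonalGroup (Fin n) ℝ × RP n => act p.1 p.2) ∧
      -- transitivity
      (∀ u v : RP n, ∃ A : Matrix.orthogonalGroup (Fin n) ℝ, act A u = v) ∧
      -- orbit–stabilizer homeomorphism
      (∃ h : (Matrix.orthogonalGroup (Fin n) ℝ ⧸ stabLine n) ≃ₜ RP n,
        ∀ A : Matrix.orthogonalGroup (Fin n) ℝ,
          ∃ y : Metric.sphere (0 : EuclideanSpace ℝ (Fin n)) 1,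
            (y : EuclideanSpace ℝ (Fin n)) =
              (A : Matrix (Fin n) (Fin n) ℝ).mulVec (e0 n) ∧
            h (QuotientGroup.mk A) = Quot.mk _ y) := by
  refine ⟨act, ?_, act_one, act_mul, continuous_act n, ?_, ?_⟩
  · intro A x
    exact ⟨sAct A x, rfl, rfl⟩
  · intro u v
    obtain ⟨x, rfl⟩ := Quot.exists_rep u
    obtain ⟨y, rfl⟩ := Quot.exists_rep v
    obtain ⟨A, hA⟩ := sphere_transitive n hn x
    obtain ⟨B, hB⟩ := sphere_transitive n hn y
    refine ⟨B * A⁻¹, ?_⟩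
    have hx : Quot.mk (sR n) x = act A (Quot.mk (sR n) (e0pt n hn)) :=
      (congrArg (Quot.mk (sR n)) (Subtype.ext (WithLp.ofLp_injective 2 hA))).symm
    rw [hx, act_mul, ← act_mul A⁻¹ A, inv_mul_cancel, act_one]
    exact congrArg (Quot.mk (sR n)) (Subtype.ext (WithLp.ofLp_injective 2 hB))
  · haveI := rp_t2 n
    refine ⟨Continuous.homeoOfEquivCompactToT2
      (f := Equiv.ofBijective _ (fbar_bijective n hn)) (fbar_continuous n hn), ?_⟩
    intro A
    refine ⟨sAct A (e0pt n hn), rfl, ?_⟩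
    show fbar n hn (QuotientGroup.mk A) = _
    rw [fbar_mk]
    rfl
end

section
/- Let G be a topological group, let m ≥ 2, let S be the unit sphere of EuclideanSpace ℝ (Fin m), and let ρ : S → G be a continuous map satisfying ρ(−v) = (ρ v)⁻¹ for all v ∈ S. Then for every v ∈ S, the element ρ(v) * ρ(v) lies in the path component of the identity element of G. -/
/-- If `ρ` is a continuous map from the sphere `S^{m-1}` (with `m ≥ 2`) to a
topological group `G` satisfying `ρ (-v) = (ρ v)⁻¹`, then each `ρ v * ρ v` lies in
the path component of the identity. -/
theorem sq_mem_pathComponent_one_of_antipodal_inv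
    {G : Type*} [Group G] [TopologicalSpace G] [IsTopologicalGroup G]
    (m : ℕ) (hm : 2 ≤ m)
    (ρ : Metric.sphere (0 : EuclideanSpace ℝ (Fin m)) 1 → G)
    (hρ : Continuous ρ)
    (hinv : ∀ v : Metric.sphere (0 : EuclideanSpace ℝ (Fin m)) 1, ρ (-v) = (ρ v)⁻¹) :
    ∀ v : Metric.sphere (0 : EuclideanSpace ℝ (Fin m)) 1,
      ρ v * ρ v ∈ pathComponent (1 : G) := by
  intro v
  have hrank : 1 < Module.rank ℝ (EuclideanSpace ℝ (Fin m)) := by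
    have h1 : Module.finrank ℝ (EuclideanSpace ℝ (Fin m)) = m := finrank_euclideanSpace_fin
    rw [← Module.finrank_eq_rank, h1]
    exact_mod_cast lt_of_lt_of_le one_lt_two (by exact_mod_cast hm)
  have hpc : IsPathConnected (Metric.sphere (0 : EuclideanSpace ℝ (Fin m)) 1) :=
    isPathConnected_sphere hrank 0 zero_le_one
  -- path from -v to v inside the sphere
  have hjoin : JoinedIn (Metric.sphere (0 : EuclideanSpace ℝ (Fin m)) 1)
      ((-v : Metric.sphere (0 : EuclideanSpace ℝ (Fin m)) 1) : EuclideanSpace ℝ (Fin m))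
      (v : EuclideanSpace ℝ (Fin m)) :=
    hpc.joinedIn _ (by simp) _ v.2
  obtain ⟨γ, hγ⟩ := hjoin
  -- lift to a path in the subtype
  let γ' : Path (-v) (v : Metric.sphere (0 : EuclideanSpace ℝ (Fin m)) 1) :=
    { toFun := fun t => ⟨γ t, hγ t⟩
      continuous_toFun := (γ.continuous).subtype_mk _
      source' := Subtype.ext γ.source
      target' := Subtype.ext γ.target }
  -- the path t ↦ ρ (γ' t) * ρ v goes from 1 to ρ v * ρ v
  have : Joined (1 : G) (ρ v * ρ v) := by
    refine ⟨{ toFun := fun t => ρ (γ' t) * ρ v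
              continuous_toFun := ((hρ.comp γ'.continuous).mul continuous_const)
              source' := ?_
              target' := ?_ }⟩
    · simp [γ', hinv v]
    · simp [γ']
  exact this
end

section
/- Let n ≥ 1 and let A, B ∈ O(n) = Matrix.orthogonalGroup (Fin n) ℝ. Then A and B are joined by a continuous path inside O(n) if and only if det A = det B. Consequently, O(n) has exactly two path components, distinguished by the determinant, which takes only the values 1 and −1 on O(n). -/
open Matrix Real

namespace OrthoJoin

variable {n : ℕ}

lemma star_eq_transpose (A : Matrix (Fin n) (Fin n) ℝ) : star A = Aᵀ := by
  rw [Matrix.star_eq_conjTranspose, Matrix.conjTranspose_eq_transpose_of_trivial]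

lemma mem_iff' {A : Matrix (Fin n) (Fin n) ℝ} :
    A ∈ Matrix.orthogonalGroup (Fin n) ℝ ↔ Aᵀ * A = 1 := by
  rw [Matrix.mem_orthogonalGroup_iff']

lemma vmv_transpose (a b : Fin n → ℝ) : (vecMulVec a b)ᵀ = vecMulVec b a := by
  ext i j; simp [vecMulVec, mul_comm]

lemma vmv_mul (a b c d : Fin n → ℝ) :
    vecMulVec a b * vecMulVec c d = (b ⬝ᵥ c) • vecMulVec a d := by
  ext i j
  simp only [Matrix.mul_apply, vecMulVec_apply, Matrix.smul_apply, dotProduct,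
    Finset.sum_mul, smul_eq_mul]
  exact Finset.sum_congr rfl fun k _ => by ring

lemma vmv_mulVec (a b x : Fin n → ℝ) :
    vecMulVec a b *ᵥ x = (b ⬝ᵥ x) • a := by
  ext i
  simp only [mulVec, dotProduct, vecMulVec_apply, Pi.smul_apply, smul_eq_mul, Finset.sum_mul]
  exact Finset.sum_congr rfl fun k _ => by ring

/-- rotation by angle `θ` in the plane spanned by the orthonormal pair `u`, `w` -/
noncomputable def rot (u w : Fin n → ℝ) (θ : ℝ) : Matrix (Fin n) (Fin n) ℝ :=
  1 + (Real.cos θ - 1) • (vecMulVec u u + vecMulVec w w)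
    + Real.sin θ • (vecMulVec w u - vecMulVec u w)

lemma rot_zero (u w : Fin n → ℝ) : rot u w 0 = 1 := by
  simp [rot]

lemma rot_transpose (u w : Fin n → ℝ) (θ : ℝ) : (rot u w θ)ᵀ = rot u w (-θ) := by
  simp only [rot, transpose_add, transpose_sub, transpose_smul, transpose_one,
    vmv_transpose, Real.cos_neg, Real.sin_neg]
  module

lemma continuous_rot (u w : Fin n → ℝ) : Continuous fun θ => rot u w θ := by
  unfold rot
  fun_prop

section rotlemmas

variable {u w : Fin n → ℝ} (huu : u ⬝ᵥ u = 1) (hww : w ⬝ᵥ w = 1) (huw : u ⬝ᵥ w = 0)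
include huu hww huw

lemma rot_mul_rot (θ φ : ℝ) : rot u w θ * rot u w φ = rot u w (θ + φ) := by
  have hwu : w ⬝ᵥ u = 0 := by rwa [dotProduct_comm]
  simp only [rot, mul_add, add_mul, mul_sub, sub_mul, mul_one, one_mul, smul_mul_assoc,
    mul_smul_comm, vmv_mul, huu, hww, huw, hwu, one_smul, zero_smul, smul_add, smul_sub,
    smul_smul, Real.cos_add, Real.sin_add]
  module

lemma rot_mem (θ : ℝ) : rot u w θ ∈ Matrix.orthogonalGroup (Fin n) ℝ := by
  rw [mem_iff', rot_transpose, rot_mul_rot huu hww huw, neg_add_cancel, rot_zero]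

omit huu hww huw in
lemma rot_mulVec (θ : ℝ) (x : Fin n → ℝ) :
    rot u w θ *ᵥ x = x + ((Real.cos θ - 1) * (u ⬝ᵥ x)) • u + ((Real.cos θ - 1) * (w ⬝ᵥ x)) • w
      + (Real.sin θ * (u ⬝ᵥ x)) • w - (Real.sin θ * (w ⬝ᵥ x)) • u := by
  simp only [rot, add_mulVec, sub_mulVec, smul_mulVec, one_mulVec, vmv_mulVec,
    smul_smul]
  module

/-- `rot u w θ` is joined to `1` inside the orthogonal group. -/
lemma joined_one_rot (θ : ℝ) :
    Joined (1 : Matrix.orthogonalGroup (Fin n) ℝ) ⟨rot u w θ, rot_mem huu hww huw θ⟩ := by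
  exact ⟨{
    toFun := fun t => ⟨rot u w (t * θ), rot_mem huu hww huw _⟩
    continuous_toFun := by
      apply Continuous.subtype_mk
      exact (continuous_rot u w).comp (by fun_prop)
    source' := by ext : 1; simp [rot_zero]
    target' := by ext : 1; simp }⟩

end rotlemmas

instance : IsTopologicalGroup (Matrix.orthogonalGroup (Fin n) ℝ) where
  continuous_mul := by
    apply Continuous.subtype_mk
    exact (continuous_subtype_val.comp continuous_fst).mul
      (continuous_subtype_val.comp continuous_snd)
  continuous_inv := by
    apply Continuous.subtype_mk
    exact continuous_star.comp continuous_subtype_val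

lemma joined_mul_right {x y : Matrix.orthogonalGroup (Fin n) ℝ} (h : Joined x y)
    (z : Matrix.orthogonalGroup (Fin n) ℝ) : Joined (x * z) (y * z) :=
  ⟨h.somePath.map (continuous_mul_right z)⟩

lemma joined_inv_mul {S : Matrix.orthogonalGroup (Fin n) ℝ} (h : Joined 1 S)
    (A : Matrix.orthogonalGroup (Fin n) ℝ) : Joined A (S⁻¹ * A) := by
  have := (⟨h.somePath.map (show Continuous fun g : Matrix.orthogonalGroup (Fin n) ℝ =>
    g⁻¹ * A from (continuous_inv.mul continuous_const))⟩ : Joined (1⁻¹ * A) (S⁻¹ * A))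
  rw [inv_one, one_mul] at this
  exact this

/-- embed an `n×n` matrix as a block matrix `1 ⊕ C` of size `n+1` -/
def emb (C : Matrix (Fin n) (Fin n) ℝ) : Matrix (Fin (n + 1)) (Fin (n + 1)) ℝ :=
  Matrix.of fun i j =>
    Fin.cases (Fin.cases 1 (fun _ => 0) j) (fun i' => Fin.cases 0 (fun j' => C i' j') j) i

@[simp] lemma emb_zero_zero (C : Matrix (Fin n) (Fin n) ℝ) : emb C 0 0 = 1 := rfl
@[simp] lemma emb_zero_succ (C : Matrix (Fin n) (Fin n) ℝ) (j : Fin n) :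
    emb C 0 j.succ = 0 := rfl
@[simp] lemma emb_succ_zero (C : Matrix (Fin n) (Fin n) ℝ) (i : Fin n) :
    emb C i.succ 0 = 0 := rfl
@[simp] lemma emb_succ_succ (C : Matrix (Fin n) (Fin n) ℝ) (i j : Fin n) :
    emb C i.succ j.succ = C i j := rfl

lemma emb_mul (C D : Matrix (Fin n) (Fin n) ℝ) : emb C * emb D = emb (C * D) := by
  ext i j
  rw [Matrix.mul_apply, Fin.sum_univ_succ]
  refine Fin.cases ?_ (fun i' => ?_) i <;> refine Fin.cases ?_ (fun j' => ?_) j <;>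
    simp [Matrix.mul_apply]

lemma emb_one : emb (1 : Matrix (Fin n) (Fin n) ℝ) = 1 := by
  ext i j
  refine Fin.cases ?_ (fun i' => ?_) i <;> refine Fin.cases ?_ (fun j' => ?_) j <;>
    simp [Matrix.one_apply, Fin.succ_ne_zero, (Fin.succ_ne_zero _).symm, Fin.succ_inj]

lemma emb_transpose (C : Matrix (Fin n) (Fin n) ℝ) : (emb C)ᵀ = emb Cᵀ := by
  ext i j
  refine Fin.cases ?_ (fun i' => ?_) i <;> refine Fin.cases ?_ (fun j' => ?_) j <;> simp

lemma emb_mem {C : Matrix (Fin n) (Fin n) ℝ} (hC : C ∈ Matrix.orthogonalGroup (Fin n) ℝ) :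
    emb C ∈ Matrix.orthogonalGroup (Fin (n + 1)) ℝ := by
  rw [mem_iff'] at hC ⊢
  rw [emb_transpose, emb_mul, hC, emb_one]

lemma continuous_emb : Continuous (emb (n := n)) := by
  apply continuous_matrix
  intro i j
  refine Fin.cases ?_ (fun i' => ?_) i <;> refine Fin.cases ?_ (fun j' => ?_) j
  · exact continuous_const
  · exact continuous_const
  · exact continuous_const
  · exact Continuous.matrix_elem continuous_id i' j'

lemma joined_emb {X Y : Matrix.orthogonalGroup (Fin n) ℝ} (h : Joined X Y) :
    Joined (⟨emb X.1, emb_mem X.2⟩ : Matrix.orthogonalGroup (Fin (n + 1)) ℝ)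
      ⟨emb Y.1, emb_mem Y.2⟩ :=
  ⟨h.somePath.map (show Continuous fun X : Matrix.orthogonalGroup (Fin n) ℝ =>
    (⟨emb X.1, emb_mem X.2⟩ : Matrix.orthogonalGroup (Fin (n + 1)) ℝ) from
    Continuous.subtype_mk (continuous_emb.comp continuous_subtype_val) _)⟩

/-- a matrix in `O(n+1)` fixing `e₀` is a block matrix -/
lemma eq_emb {B : Matrix (Fin (n + 1)) (Fin (n + 1)) ℝ}
    (hB : B ∈ Matrix.orthogonalGroup (Fin (n + 1)) ℝ)
    (hcol : ∀ i, B i 0 = (Pi.single 0 1 : Fin (n + 1) → ℝ) i) :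
    B = emb (B.submatrix Fin.succ Fin.succ) ∧
      B.submatrix Fin.succ Fin.succ ∈ Matrix.orthogonalGroup (Fin n) ℝ ∧
      B.det = (B.submatrix Fin.succ Fin.succ).det := by
  have h00 : B 0 0 = 1 := by simpa using hcol 0
  have hs0 : ∀ i : Fin n, B i.succ 0 = 0 := fun i => by
    simpa [Pi.single_apply, Fin.succ_ne_zero] using hcol i.succ
  rw [mem_iff'] at hB
  have hrow : ∀ j : Fin n, B 0 j.succ = 0 := by
    intro j
    have := congrFun (congrFun hB 0) j.succ
    rw [Matrix.mul_apply, Fin.sum_univ_succ] at this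
    simp only [transpose_apply, h00, one_mul, Matrix.one_apply,
      (Fin.succ_ne_zero j).symm, if_false] at this
    simpa [hs0] using this
  have hBemb : B = emb (B.submatrix Fin.succ Fin.succ) := by
    ext i j
    refine Fin.cases ?_ (fun i' => ?_) i <;> refine Fin.cases ?_ (fun j' => ?_) j
    · simp [h00]
    · simp [hrow]
    · simp [hs0]
    · simp
  refine ⟨hBemb, ?_, ?_⟩
  · rw [mem_iff']
    ext i j
    have := congrFun (congrFun hB i.succ) j.succ
    rw [Matrix.mul_apply, Fin.sum_univ_succ] at this
    simp only [transpose_apply, hrow, zero_mul, zero_add] at this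
    rw [Matrix.mul_apply]
    simp only [transpose_apply, submatrix_apply]
    rw [this, Matrix.one_apply, Matrix.one_apply]
    simp [Fin.succ_inj]
  · rw [Matrix.det_succ_row_zero, Fin.sum_univ_succ]
    simp only [hrow, mul_zero, zero_mul, Finset.sum_const_zero, add_zero,
      h00, Fin.val_zero, pow_zero, one_mul, mul_zero]
    simp [Fin.succAbove_zero]

lemma det_pm (A : Matrix.orthogonalGroup (Fin n) ℝ) :
    (A : Matrix (Fin n) (Fin n) ℝ).det = 1 ∨ (A : Matrix (Fin n) (Fin n) ℝ).det = -1 := by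
  have h := congrArg Matrix.det (mem_iff'.mp A.2)
  rw [Matrix.det_mul, Matrix.det_transpose, Matrix.det_one] at h
  exact mul_self_eq_one_iff.mp h

lemma joined_det_eq {A B : Matrix.orthogonalGroup (Fin n) ℝ} (h : Joined A B) :
    (A : Matrix (Fin n) (Fin n) ℝ).det = (B : Matrix (Fin n) (Fin n) ℝ).det := by
  obtain ⟨γ⟩ := h
  set g : unitInterval → ℝ := fun t => ((γ t : Matrix.orthogonalGroup (Fin n) ℝ) :
    Matrix (Fin n) (Fin n) ℝ).det with hg
  have hgc : Continuous g := (continuous_subtype_val.comp γ.continuous).matrix_det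
  have hval : ∀ t, g t = 1 ∨ g t = -1 := fun t => det_pm _
  have h0 : g 0 = (A : Matrix (Fin n) (Fin n) ℝ).det := by simp [hg]
  have h1 : g 1 = (B : Matrix (Fin n) (Fin n) ℝ).det := by simp [hg]
  by_contra hne
  rcases det_pm A with hA | hA <;> rcases det_pm B with hB | hB
  · exact hne (hA.trans hB.symm)
  · obtain ⟨t, ht⟩ := intermediate_value_univ (1 : unitInterval) 0 hgc
      (show (0:ℝ) ∈ Set.Icc (g 1) (g 0) by rw [h0, h1, hA, hB]; norm_num)
    rcases hval t with h | h <;> rw [ht] at h <;> norm_num at h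
  · obtain ⟨t, ht⟩ := intermediate_value_univ (0 : unitInterval) 1 hgc
      (show (0:ℝ) ∈ Set.Icc (g 0) (g 1) by rw [h0, h1, hA, hB]; norm_num)
    rcases hval t with h | h <;> rw [ht] at h <;> norm_num at h
  · exact hne (hA.trans hB.symm)

theorem joined_one : ∀ (n : ℕ) (A : Matrix.orthogonalGroup (Fin n) ℝ),
    (A : Matrix (Fin n) (Fin n) ℝ).det = 1 →
    Joined A (1 : Matrix.orthogonalGroup (Fin n) ℝ) := by
  intro n
  induction n with
  | zero =>
    intro A _
    have hA1 : A = 1 := Subtype.ext (by ext i j; exact i.elim0)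
    rw [hA1]
  | succ n IH =>
    intro A hdet
    set e : Fin (n + 1) → ℝ := Pi.single 0 1 with he
    set a : Fin (n + 1) → ℝ := fun i => (A : Matrix (Fin (n+1)) (Fin (n+1)) ℝ) i 0 with ha
    have hAA := mem_iff'.mp A.2
    have haa : a ⬝ᵥ a = 1 := by
      have := congrFun (congrFun hAA 0) 0
      rw [Matrix.mul_apply] at this
      simpa [dotProduct, ha, Matrix.one_apply] using this
    have hee : e ⬝ᵥ e = 1 := by simp [he, dotProduct, Pi.single_apply]
    have hea : e ⬝ᵥ a = (A : Matrix (Fin (n+1)) (Fin (n+1)) ℝ) 0 0 := by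
      simp [he, dotProduct, Pi.single_apply, ha]
    set c : ℝ := (A : Matrix (Fin (n+1)) (Fin (n+1)) ℝ) 0 0 with hc
    have hae : a ⬝ᵥ e = c := by rw [dotProduct_comm]; exact hea
    have hsub : ∀ t : ℝ, (a - t • e) ⬝ᵥ (a - t • e) = 1 - 2 * t * c + t ^ 2 := by
      intro t
      rw [sub_dotProduct, dotProduct_sub, dotProduct_sub, smul_dotProduct, smul_dotProduct,
        dotProduct_smul, dotProduct_smul, haa, hee, hea, hae]
      simp only [smul_eq_mul]
      ring
    have claim : ∃ S : Matrix.orthogonalGroup (Fin (n+1)) ℝ,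
        Joined 1 S ∧ (S : Matrix (Fin (n+1)) (Fin (n+1)) ℝ) *ᵥ e = a := by
      rcases eq_or_ne c 1 with hc1 | hc1
      · refine ⟨1, Joined.refl _, ?_⟩
        have h0 : (a - e) ⬝ᵥ (a - e) = 0 := by
          have h' : a - e = a - (1:ℝ) • e := by module
          rw [h', hsub 1, hc1]; ring
        have hae' : a = e := by
          have := dotProduct_self_eq_zero.mp h0
          linear_combination (norm := module) this
        simp [hae']
      rcases eq_or_ne c (-1) with hcm | hcm
      · have h0 : (a + e) ⬝ᵥ (a + e) = 0 := by
          have h' : a + e = a - (-1 : ℝ) • e := by module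
          rw [h', hsub (-1), hcm]; ring
        have hane : a = -e := by
          have := dotProduct_self_eq_zero.mp h0
          linear_combination (norm := module) this
        rcases Nat.eq_zero_or_pos n with rfl | hn1
        · exfalso
          have hd1 : (A : Matrix (Fin 1) (Fin 1) ℝ).det = c := Matrix.det_fin_one _
          rw [hdet, hcm] at hd1
          norm_num at hd1
        · obtain ⟨m, rfl⟩ := Nat.exists_eq_add_of_le hn1
          set f : Fin (1 + m + 1) → ℝ := Pi.single 1 1 with hf
          have h01 : (0 : Fin (1 + m + 1)) ≠ 1 := by
            intro h
            have h2 : ((1 : Fin (1 + m + 1)) : ℕ) = 1 := by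
              rw [Fin.val_one']
              exact Nat.mod_eq_of_lt (by omega)
            have h3 := congrArg Fin.val h
            rw [h2] at h3
            simp at h3
          have hef : e ⬝ᵥ f = 0 := by
            rw [he, hf, single_dotProduct, Pi.single_eq_of_ne h01, mul_zero]
          have hff : f ⬝ᵥ f = 1 := by
            rw [hf, single_dotProduct, Pi.single_eq_same, mul_one]
          refine ⟨⟨rot e f π, rot_mem hee hff hef π⟩, joined_one_rot hee hff hef π, ?_⟩
          rw [rot_mulVec π e, hee, dotProduct_comm f e, hef, Real.cos_pi, Real.sin_pi, hane]
          module
      · have hb : (a - c • e) ⬝ᵥ (a - c • e) = 1 - c ^ 2 := by rw [hsub c]; ring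
        have hnn : (0:ℝ) ≤ 1 - c ^ 2 := by
          rw [← hb]
          exact Finset.sum_nonneg fun i _ => mul_self_nonneg _
        have hlt : c ^ 2 < 1 := by
          rcases lt_or_eq_of_le (by linarith : c ^ 2 ≤ 1) with h | h
          · exact h
          · rcases mul_self_eq_one_iff.mp (by nlinarith : c * c = 1) with h' | h'
            · exact absurd h' hc1
            · exact absurd h' hcm
        set s0 : ℝ := Real.sqrt (1 - c ^ 2) with hs0
        have hs0pos : 0 < s0 := Real.sqrt_pos.mpr (by linarith)
        have hs0sq : s0 ^ 2 = 1 - c ^ 2 := Real.sq_sqrt (by linarith)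
        set w : Fin (n + 1) → ℝ := s0⁻¹ • (a - c • e) with hw
        have hew : e ⬝ᵥ w = 0 := by
          rw [hw, dotProduct_smul, dotProduct_sub, dotProduct_smul, hea, hee]
          simp
        have hww : w ⬝ᵥ w = 1 := by
          rw [hw, smul_dotProduct, dotProduct_smul, hb]
          have : s0 ≠ 0 := ne_of_gt hs0pos
          simp only [smul_eq_mul]
          field_simp
          nlinarith [hs0sq]
        have hcos : Real.cos (Real.arccos c) = c :=
          Real.cos_arccos (by nlinarith) (by nlinarith)
        have hsin : Real.sin (Real.arccos c) = s0 := by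
          rw [Real.sin_arccos]
        refine ⟨⟨rot e w (Real.arccos c), rot_mem hee hww hew _⟩,
          joined_one_rot hee hww hew _, ?_⟩
        rw [rot_mulVec _ e, hee, dotProduct_comm w e, hew, hcos, hsin]
        have hsw : s0 • w = a - c • e := by
          rw [hw, smul_smul, mul_inv_cancel₀ (ne_of_gt hs0pos), one_smul]
        linear_combination (norm := module) hsw
    obtain ⟨S, hjS, hSe⟩ := claim
    set B : Matrix.orthogonalGroup (Fin (n+1)) ℝ := S⁻¹ * A with hB
    have hAB : Joined A B := joined_inv_mul hjS A
    have hinv : ((S⁻¹ : Matrix.orthogonalGroup (Fin (n+1)) ℝ) : Matrix (Fin (n+1)) (Fin (n+1)) ℝ)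
        * (S : Matrix (Fin (n+1)) (Fin (n+1)) ℝ) = 1 := by
      have := congrArg (Subtype.val) (inv_mul_cancel S)
      simpa using this
    have hAe : (A : Matrix (Fin (n+1)) (Fin (n+1)) ℝ) *ᵥ e = a := by
      rw [he, Matrix.mulVec_single]
      ext i
      simp [ha]
    have hBe : (B : Matrix (Fin (n+1)) (Fin (n+1)) ℝ) *ᵥ e = e := by
      have hBc : (B : Matrix (Fin (n+1)) (Fin (n+1)) ℝ) =
          ((S⁻¹ : Matrix.orthogonalGroup (Fin (n+1)) ℝ) : Matrix (Fin (n+1)) (Fin (n+1)) ℝ)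
          * (A : Matrix (Fin (n+1)) (Fin (n+1)) ℝ) := rfl
      rw [hBc, ← Matrix.mulVec_mulVec, hAe, ← hSe, Matrix.mulVec_mulVec, hinv, Matrix.one_mulVec]
    have hcol : ∀ i, (B : Matrix (Fin (n+1)) (Fin (n+1)) ℝ) i 0 =
        (Pi.single 0 1 : Fin (n + 1) → ℝ) i := by
      intro i
      have h1 := congrFun hBe i
      rw [he, Matrix.mulVec_single] at h1
      simpa using h1
    obtain ⟨hBemb, hCmem, hdetBC⟩ := eq_emb B.2 hcol
    have hdetB : (B : Matrix (Fin (n+1)) (Fin (n+1)) ℝ).det = 1 := by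
      rw [← joined_det_eq hAB]; exact hdet
    have hC1 : ((B : Matrix (Fin (n+1)) (Fin (n+1)) ℝ).submatrix Fin.succ Fin.succ).det = 1 := by
      rw [← hdetBC]; exact hdetB
    have hJC := IH ⟨_, hCmem⟩ hC1
    have hB1 : Joined B (1 : Matrix.orthogonalGroup (Fin (n+1)) ℝ) := by
      convert joined_emb hJC using 1
      · exact Subtype.ext hBemb
      · exact Subtype.ext emb_one.symm
    exact hAB.trans hB1

end OrthoJoin

/-- Two orthogonal matrices are joined by a path in `O(n)` if and only if they have
the same determinant; the determinant takes only the values `1` and `-1` on `O(n)`;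
and (for `n ≥ 1`) `O(n)` has exactly two path components. -/
theorem orthogonalGroup_joined_iff_det_eq (n : ℕ) (hn : 1 ≤ n) :
    (∀ A B : Matrix.orthogonalGroup (Fin n) ℝ,
      Joined A B ↔
        (A : Matrix (Fin n) (Fin n) ℝ).det = (B : Matrix (Fin n) (Fin n) ℝ).det) ∧
    (∀ A : Matrix.orthogonalGroup (Fin n) ℝ,
      (A : Matrix (Fin n) (Fin n) ℝ).det = 1 ∨ (A : Matrix (Fin n) (Fin n) ℝ).det = -1) ∧
    (∃ A B : Matrix.orthogonalGroup (Fin n) ℝ, ¬ Joined A B) := by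
  have part1 : ∀ A B : Matrix.orthogonalGroup (Fin n) ℝ,
      Joined A B ↔
        (A : Matrix (Fin n) (Fin n) ℝ).det = (B : Matrix (Fin n) (Fin n) ℝ).det := by
    intro A B
    constructor
    · exact OrthoJoin.joined_det_eq
    · intro h
      set D := A * B⁻¹ with hD
      have hDco : (D : Matrix (Fin n) (Fin n) ℝ) =
          (A : Matrix (Fin n) (Fin n) ℝ) * star (B : Matrix (Fin n) (Fin n) ℝ) := by
        rw [hD]
        congr 1
      have hDdet : (D : Matrix (Fin n) (Fin n) ℝ).det = 1 := by
        rw [hDco, Matrix.det_mul, OrthoJoin.star_eq_transpose, Matrix.det_transpose, ← h]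
        rcases OrthoJoin.det_pm A with h' | h' <;> rw [h'] <;> norm_num
      have h1 := OrthoJoin.joined_mul_right (OrthoJoin.joined_one n D hDdet) B
      have hDB : D * B = A := by rw [hD]; group
      rwa [hDB, one_mul] at h1
  refine ⟨part1, fun A => OrthoJoin.det_pm A, ?_⟩
  set d : Fin n → ℝ := fun i => if i = ⟨0, hn⟩ then -1 else 1 with hd
  have hmem : Matrix.diagonal d ∈ Matrix.orthogonalGroup (Fin n) ℝ := by
    rw [OrthoJoin.mem_iff', Matrix.diagonal_transpose, Matrix.diagonal_mul_diagonal]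
    have hdd : (fun i => d i * d i) = fun _ => (1 : ℝ) := by
      funext i
      by_cases h : i = ⟨0, hn⟩ <;> simp [hd, h]
    rw [hdd, Matrix.diagonal_one]
  have hdetd : (Matrix.diagonal d).det = -1 := by
    rw [Matrix.det_diagonal]
    rw [Finset.prod_eq_single (⟨0, hn⟩ : Fin n) (fun b _ hb => by simp [hd, hb])
      (fun h => absurd (Finset.mem_univ _) h)]
    simp [hd]
  refine ⟨1, ⟨Matrix.diagonal d, hmem⟩, fun hJ => ?_⟩
  have := (part1 _ _).mp hJ
  rw [OneMemClass.coe_one, Matrix.det_one] at this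
  rw [hdetd] at this
  norm_num at this
end
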